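/- Let f : {z : ℂ // z ≠ 0 ∧ z ≠ -1} → {z : ℂ // z ≠ 0} be the map sending z to z². Then f is continuous and surjective, every fiber of f is finite (hence compact), but f is not a proper map (there exists a compact subset of the target whose preimage is not compact). -/

import Mathlib

open Filter Topology

theorem stmt_8 (f : {z : ℂ // z ≠ 0 ∧ z ≠ -1} → {z : ℂ // z ≠ 0})
    (hf : ∀ z, (f z : ℂ) = (z : ℂ) ^ 2) :
    Continuous f ∧ Function.Surjective f ∧
    (∀ y, (f ⁻¹' {y}).Finite) ∧ ¬ IsProperMap f := by
  have hcont : Continuous f := by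
    apply continuous_induced_rng.2
    have : (fun z : {z : ℂ // z ≠ 0 ∧ z ≠ -1} => (f z : ℂ)) = fun z => (z.1 : ℂ) ^ 2 :=
      funext hf
    show Continuous fun z : {z : ℂ // z ≠ 0 ∧ z ≠ -1} => (f z : ℂ)
    rw [this]
    exact (continuous_subtype_val.pow 2)
  refine ⟨hcont, ?_, ?_, ?_⟩
  · -- surjectivity
    rintro ⟨y, hy⟩
    obtain ⟨w, hw⟩ : ∃ w : ℂ, w ^ 2 = y := IsAlgClosed.exists_pow_nat_eq y two_pos
    have hw0 : w ≠ 0 := by rintro rfl; simp at hw; exact hy hw.symm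
    by_cases hw1 : w = -1
    · have hy1 : y = 1 := by rw [← hw, hw1]; ring
      refine ⟨⟨1, one_ne_zero, by norm_num⟩, ?_⟩
      apply Subtype.ext
      rw [hf]; simp [hy1]
    · refine ⟨⟨w, hw0, hw1⟩, ?_⟩
      apply Subtype.ext
      rw [hf]; exact hw
  · -- finite fibers
    intro y
    obtain ⟨w, hw⟩ : ∃ w : ℂ, w ^ 2 = (y : ℂ) := IsAlgClosed.exists_pow_nat_eq (y : ℂ) two_pos
    have hfin : ({w, -w} : Set ℂ).Finite := (Set.finite_singleton (-w)).insert w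
    have hsub : f ⁻¹' {y} ⊆ (fun z : {z : ℂ // z ≠ 0 ∧ z ≠ -1} => (z : ℂ)) ⁻¹' {w, -w} := by
      intro z hz
      have hz2 : (z : ℂ) ^ 2 = w ^ 2 := by
        rw [hw, ← hf z]
        exact congrArg Subtype.val hz
      have : ((z : ℂ) - w) * ((z : ℂ) + w) = 0 := by linear_combination hz2
      rcases mul_eq_zero.1 this with h | h
      · left; exact sub_eq_zero.1 h
      · right; exact eq_neg_of_add_eq_zero_left h
    exact Set.Finite.subset
      (Set.Finite.preimage (Set.injOn_of_injective Subtype.val_injective) hfin) hsub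
  · -- not proper
    intro hprop
    set K : Set {z : ℂ // z ≠ 0} := {y | ‖(y : ℂ)‖ = 1} with hKdef
    have hKimg : (fun y : {z : ℂ // z ≠ 0} => (y : ℂ)) '' K = Metric.sphere (0 : ℂ) 1 := by
      ext z
      constructor
      · rintro ⟨⟨z, hz⟩, hmem, rfl⟩
        simpa [hKdef, mem_sphere_iff_norm] using hmem
      · intro hz
        rw [mem_sphere_iff_norm, sub_zero] at hz
        exact ⟨⟨z, by intro h; rw [h] at hz; simp at hz⟩, hz, rfl⟩
    have hK : IsCompact K := by
      rw [Topology.IsEmbedding.isCompact_iff Topology.IsEmbedding.subtypeVal, hKimg]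
      exact isCompact_sphere 0 1
    have hS : IsCompact (f ⁻¹' K) := hprop.isCompact_preimage hK
    have hSc : IsCompact ((fun z : {z : ℂ // z ≠ 0 ∧ z ≠ -1} => (z : ℂ)) '' (f ⁻¹' K)) :=
      hS.image continuous_subtype_val
    have hclosed : IsClosed ((fun z : {z : ℂ // z ≠ 0 ∧ z ≠ -1} => (z : ℂ)) '' (f ⁻¹' K)) :=
      hSc.isClosed
    -- the sequence exp((π - 1/(n+1)) I) lies in the image and tends to -1
    set t : ℕ → ℝ := fun n => Real.pi - 1 / (n + 1) with htdef
    set a : ℕ → ℂ := fun n => Complex.exp ((t n : ℂ) * Complex.I) with hadef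
    have hnorm : ∀ n, ‖a n‖ = 1 := fun n => by
      simp only [hadef]
      exact Complex.norm_exp_ofReal_mul_I (t n)
    have ha0 : ∀ n, a n ≠ 0 := fun n h => by
      have := hnorm n; rw [h] at this; simp at this
    have ha1 : ∀ n, a n ≠ -1 := by
      intro n h
      simp only [hadef] at h
      have : Complex.exp ((t n : ℂ) * Complex.I - (Real.pi : ℂ) * Complex.I) = 1 := by
        rw [Complex.exp_sub, h, Complex.exp_pi_mul_I]
        simp
      obtain ⟨k, hk⟩ := Complex.exp_eq_one_iff.1 this
      have hI : ((t n : ℂ) - Real.pi) * Complex.I = (k : ℂ) * (2 * Real.pi) * Complex.I := by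
        rw [sub_mul]; rw [hk]; ring
      have h2 : ((t n : ℂ) - Real.pi) = (k : ℂ) * (2 * Real.pi) :=
        mul_right_cancel₀ Complex.I_ne_zero hI
      have h3 : (t n - Real.pi : ℝ) = (k : ℝ) * (2 * Real.pi) := by
        exact_mod_cast h2
      have h4 : t n - Real.pi = -(1 / (n + 1)) := by rw [htdef]; ring
      rw [h4] at h3
      have hpos : (0 : ℝ) < 1 / (n + 1 : ℝ) := by positivity
      have hle : 1 / ((n : ℝ) + 1) ≤ 1 := by
        rw [div_le_one (by positivity)]
        simp
      rcases lt_trichotomy k 0 with hk0 | hk0 | hk0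
      · have hk1 : (k : ℝ) ≤ -1 := by exact_mod_cast (by omega : k ≤ -1)
        have hmul : (k : ℝ) * (2 * Real.pi) ≤ -1 * (2 * Real.pi) :=
          mul_le_mul_of_nonneg_right hk1 (by positivity)
        linarith [Real.pi_gt_three]
      · rw [hk0] at h3
        simp at h3
        linarith
      · have hk1 : (1 : ℝ) ≤ (k : ℝ) := by exact_mod_cast hk0
        have hmul : (1 : ℝ) * (2 * Real.pi) ≤ (k : ℝ) * (2 * Real.pi) :=
          mul_le_mul_of_nonneg_right hk1 (by positivity)
        linarith [Real.pi_gt_three]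
    have hmem : ∀ n, a n ∈ (fun z : {z : ℂ // z ≠ 0 ∧ z ≠ -1} => (z : ℂ)) '' (f ⁻¹' K) := by
      intro n
      refine ⟨⟨a n, ha0 n, ha1 n⟩, ?_, rfl⟩
      show f _ ∈ K
      rw [hKdef]
      show ‖(f ⟨a n, ha0 n, ha1 n⟩ : ℂ)‖ = 1
      rw [hf]
      simp [norm_pow, hnorm n]
    have htend : Tendsto a atTop (𝓝 (-1 : ℂ)) := by
      have h1 : Tendsto t atTop (𝓝 Real.pi) := by
        rw [htdef]
        have h2 : Tendsto (fun n : ℕ => Real.pi - 1 / (n + 1)) atTop (𝓝 (Real.pi - 0)) :=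
          tendsto_const_nhds.sub tendsto_one_div_add_atTop_nhds_zero_nat
        simpa using h2
      have h2 : Tendsto (fun n => (t n : ℂ) * Complex.I) atTop (𝓝 ((Real.pi : ℂ) * Complex.I)) :=
        ((Complex.continuous_ofReal.tendsto _).comp h1).mul_const _
      have h3 := (Complex.continuous_exp.tendsto _).comp h2
      rwa [Complex.exp_pi_mul_I] at h3
    have : (-1 : ℂ) ∈ (fun z : {z : ℂ // z ≠ 0 ∧ z ≠ -1} => (z : ℂ)) '' (f ⁻¹' K) :=
      hclosed.mem_of_tendsto htend (Eventually.of_forall hmem)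
    obtain ⟨⟨z, hz0, hz1⟩, -, hzeq⟩ := this
    exact hz1 hzeq
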